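/- Let A be an associative algebra over the field ℚ(v) (or over ℂ with v a fixed real number > 1). Suppose given families of elements x_k (k ∈ ℤ), y_t (t ∈ ℤ), and h_l (l ≥ 1) of A satisfying: [h_l, x_k] = −([l]/l)·x_{k+l} and [h_l, y_t] = ([2l]/l)·y_{t+l} for all l ≥ 1, k, t ∈ ℤ, where [m] = (v^m − v^{−m})/(v − v^{−1}). Define S(k_1, k_2; t) = Sym_{k_1,k_2}( x_{k_1}x_{k_2}y_t − [2]·x_{k_1}y_t x_{k_2} + y_t x_{k_1}x_{k_2} ), where Sym_{k_1,k_2} denotes symmetrization in the indices k_1, k_2. If S(0, 0; t) = 0 for all t ∈ ℤ, then S(k_1, k_2; t) = 0 for all k_1, k_2 ≥ 0 and all t ∈ ℤ. -/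

import Mathlib

/-- The quantum integer `[m] = (v^m - v^{-m})/(v - v⁻¹)`. -/
noncomputable def qint (v : ℝ) (m : ℤ) : ℝ := (v ^ m - v ^ (-m)) / (v - v⁻¹)

private lemma lieMul' {A : Type*} [Ring A] (a b c : A) :
    ⁅a, b * c⁆ = ⁅a, b⁆ * c + b * ⁅a, c⁆ := by
  simp only [Ring.lie_def]; noncomm_ring

private lemma lieAdd' {A : Type*} [Ring A] (a b c : A) :
    ⁅a, b + c⁆ = ⁅a, b⁆ + ⁅a, c⁆ := by
  simp only [Ring.lie_def]; noncomm_ring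

private lemma lieSub' {A : Type*} [Ring A] (a b c : A) :
    ⁅a, b - c⁆ = ⁅a, b⁆ - ⁅a, c⁆ := by
  simp only [Ring.lie_def]; noncomm_ring

private lemma lieSmul' {A : Type*} [Ring A] [Algebra ℂ A] (a b : A) (r : ℂ) :
    ⁅a, r • b⁆ = r • ⁅a, b⁆ := by
  simp only [Ring.lie_def, smul_mul_assoc, mul_smul_comm, smul_sub]

private lemma lieZero' {A : Type*} [Ring A] (a : A) : ⁅a, (0 : A)⁆ = 0 := by
  simp only [Ring.lie_def, mul_zero, zero_mul, sub_zero]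

private lemma qint_pos {v : ℝ} (hv : 1 < v) {m : ℤ} (hm : 0 < m) : 0 < qint v m := by
  have hv0 : 0 < v := lt_trans one_pos hv
  have hden : 0 < v - v⁻¹ := by
    have h1 : v⁻¹ < 1 := inv_lt_one_of_one_lt₀ hv
    linarith
  have hnum : v ^ (-m) < v ^ m := zpow_lt_zpow_right₀ hv (by omega)
  exact div_pos (by linarith) hden

theorem stmt_11 (A : Type*) [Ring A] [Algebra ℂ A] (v : ℝ) (hv : 1 < v)
    (x y : ℤ → A) (h : ℕ → A)
    (hx : ∀ l : ℕ, 1 ≤ l → ∀ k : ℤ,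
      h l * x k - x k * h l = -((qint v l / l : ℝ) : ℂ) • x (k + l))
    (hy : ∀ l : ℕ, 1 ≤ l → ∀ t : ℤ,
      h l * y t - y t * h l = ((qint v (2 * l) / l : ℝ) : ℂ) • y (t + l))
    (S : ℤ → ℤ → ℤ → A)
    (hS : ∀ k₁ k₂ t : ℤ, S k₁ k₂ t =
      (x k₁ * x k₂ * y t - ((qint v 2 : ℝ) : ℂ) • (x k₁ * y t * x k₂) + y t * x k₁ * x k₂) +
      (x k₂ * x k₁ * y t - ((qint v 2 : ℝ) : ℂ) • (x k₂ * y t * x k₁) + y t * x k₂ * x k₁))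
    (hbase : ∀ t : ℤ, S 0 0 t = 0) :
    ∀ k₁ k₂ : ℤ, 0 ≤ k₁ → 0 ≤ k₂ → ∀ t : ℤ, S k₁ k₂ t = 0 := by
  -- nonvanishing of the scalar [l]/l
  have hcl : ∀ l : ℕ, 1 ≤ l → ((qint v l / l : ℝ) : ℂ) ≠ 0 := by
    intro l hl
    have h1 : (0:ℝ) < qint v l := qint_pos hv (by exact_mod_cast hl)
    have h2 : (0:ℝ) < (l:ℝ) := by exact_mod_cast hl
    have : (qint v l / l : ℝ) ≠ 0 := ne_of_gt (div_pos h1 h2)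
    exact_mod_cast this
  -- symmetry of S
  have hsymm : ∀ a b t : ℤ, S a b t = S b a t := by
    intro a b t; rw [hS, hS]; abel
  -- the key step : applying ad(h l)
  have key : ∀ l : ℕ, 1 ≤ l → ∀ a b : ℤ, (∀ t' : ℤ, S a b t' = 0) →
      ∀ t : ℤ, S (a + l) b t + S a (b + l) t = 0 := by
    intro l hl a b h0 t
    have hx' : ∀ k : ℤ, ⁅h l, x k⁆ = -((qint v l / l : ℝ) : ℂ) • x (k + l) := by
      intro k; rw [Ring.lie_def]; exact hx l hl k
    have hy' : ∀ t' : ℤ, ⁅h l, y t'⁆ = ((qint v (2 * l) / l : ℝ) : ℂ) • y (t' + l) := by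
      intro t'; rw [Ring.lie_def]; exact hy l hl t'
    have main : ⁅h l, S a b t⁆ =
        ((qint v (2 * l) / l : ℝ) : ℂ) • S a b (t + l)
          - ((qint v l / l : ℝ) : ℂ) • (S (a + l) b t + S a (b + l) t) := by
      rw [hS a b t, hS a b (t + l), hS (a + l) b t, hS a (b + l) t]
      simp only [lieAdd', lieSub', lieSmul', lieMul', hx', hy',
        smul_mul_assoc, mul_smul_comm, neg_smul, smul_neg, smul_add, smul_sub,
        add_mul, mul_add, sub_mul, mul_sub, neg_mul, mul_neg]
      module
    rw [h0 t, lieZero', h0 (t + l), smul_zero, zero_sub, eq_comm, neg_eq_zero] at main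
    rcases smul_eq_zero.mp main with hc | hz
    · exact absurd hc (hcl l hl)
    · exact hz
  -- main induction: S (n + m) n t = 0 for all naturals n, m
  have P : ∀ n m : ℕ, ∀ t : ℤ, S ((n : ℤ) + m) n t = 0 := by
    intro n
    induction n with
    | zero =>
      intro m t
      rcases Nat.eq_zero_or_pos m with hm | hm
      · subst hm; simpa using hbase t
      · have h1 := key m hm 0 0 hbase t
        rw [hsymm 0 ((0:ℤ) + m) t] at h1
        have h2 : (2 : ℂ) • S ((0:ℤ) + m) 0 t = 0 := by
          rw [two_smul]; exact h1
        have h3 := (smul_eq_zero.mp h2).resolve_left (by norm_num)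
        simpa using h3
    | succ n ih =>
      intro m t
      have h1 := key 1 le_rfl ((n : ℤ) + (m + 1)) n (ih (m + 1)) t
      have e1 : ((n : ℤ) + (m + 1) + (1 : ℕ)) = ((n : ℤ) + (m + 2 : ℕ)) := by
        push_cast; ring
      rw [e1] at h1
      rw [ih (m + 2) t, zero_add] at h1
      have e2 : ((n : ℤ) + ((m : ℤ) + 1)) = (((n + 1 : ℕ) : ℤ) + m) := by push_cast; ring
      have e3 : ((n : ℤ) + (1 : ℕ)) = ((n + 1 : ℕ) : ℤ) := by push_cast; ring
      rw [e2, e3] at h1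
      exact h1
  intro k₁ k₂ hk₁ hk₂ t
  rcases le_total k₂ k₁ with hle | hle
  · have := P k₂.toNat (k₁ - k₂).toNat t
    rw [show ((k₂.toNat : ℤ) + (k₁ - k₂).toNat) = k₁ by omega,
      show ((k₂.toNat : ℤ)) = k₂ by omega] at this
    exact this
  · have := P k₁.toNat (k₂ - k₁).toNat t
    rw [show ((k₁.toNat : ℤ) + (k₂ - k₁).toNat) = k₂ by omega,
      show ((k₁.toNat : ℤ)) = k₁ by omega] at this
    rw [hsymm]; exact this
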